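/- Let G be a nontrivial torsion-free group, let α be an automorphism of G, let n be a positive integer, and let g ∈ G be such that αⁿ(h) = g h g⁻¹ for all h ∈ G (i.e., αⁿ is the inner automorphism given by conjugation by g). Then the semidirect product G ⋊_α ℤ, in which the generator t of ℤ acts by t h t⁻¹ = α(h), contains a subgroup isomorphic to ℤ × ℤ. -/

import Mathlib

/-- A monoid is torsion-free if no nontrivial element has finite order
(the definition `Monoid.IsTorsionFree` of the older Mathlib, since removed). -/
def Monoid.IsTorsionFree (G : Type*) [Monoid G] : Prop :=
  ∀ g : G, g ≠ 1 → ¬IsOfFinOrder g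

/-- Let `G` be a nontrivial torsion-free group, `α` an automorphism of `G`, `n` a positive
integer and `g ∈ G` such that `αⁿ` is conjugation by `g`. Then the semidirect product
`G ⋊[α] ℤ` (in which the generator of `ℤ` acts by `α`) contains a subgroup isomorphic
to `ℤ × ℤ`. -/
theorem semidirectProduct_contains_int_times_int
    {G : Type*} [Group G] [Nontrivial G] (htf : Monoid.IsTorsionFree G)
    (α : MulAut G) (n : ℕ) (hn : 0 < n) (g : G)
    (hconj : ∀ h : G, (α ^ n) h = g * h * g⁻¹) :
    ∃ f : Multiplicative (ℤ × ℤ) →*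
        SemidirectProduct G (Multiplicative ℤ) (zpowersHom (MulAut G) α),
      Function.Injective f := by
  obtain ⟨x, hx⟩ := exists_ne (1 : G)
  set N := SemidirectProduct G (Multiplicative ℤ) (zpowersHom (MulAut G) α) with hN
  let ι : G →* N := SemidirectProduct.inl
  let z : N := ⟨g⁻¹, Multiplicative.ofAdd (n : ℤ)⟩
  have hφ : (zpowersHom (MulAut G) α) (Multiplicative.ofAdd (n : ℤ)) x = g * x * g⁻¹ := by
    have : (zpowersHom (MulAut G) α) (Multiplicative.ofAdd (n : ℤ)) = α ^ n := by
      simp [zpowersHom_apply, zpow_natCast]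
    rw [this]; exact hconj x
  have hcomm : Commute (ι x) z := by
    show ι x * z = z * ι x
    rw [SemidirectProduct.mul_def, SemidirectProduct.mul_def]
    ext
    · show x * (zpowersHom (MulAut G) α) (1 : Multiplicative ℤ) g⁻¹
        = g⁻¹ * (zpowersHom (MulAut G) α) (Multiplicative.ofAdd (n : ℤ)) x
      rw [map_one, MulAut.one_apply, hφ]
      group
    · show (1 : Multiplicative ℤ) * Multiplicative.ofAdd (n : ℤ)
        = Multiplicative.ofAdd (n : ℤ) * 1
      rw [one_mul, mul_one]
  let f : Multiplicative (ℤ × ℤ) →* N :=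
    MonoidHom.mk' (fun p => ι x ^ (p.toAdd.1) * z ^ (p.toAdd.2)) (by
      intro p q
      have h := (hcomm.symm.zpow_zpow p.toAdd.2 q.toAdd.1)
      simp only [toAdd_mul, Prod.fst_add, Prod.snd_add, zpow_add]
      rw [h.mul_mul_mul_comm])
  refine ⟨f, (injective_iff_map_eq_one f).mpr ?_⟩
  intro p hp
  have hp' : ι x ^ (p.toAdd.1) * z ^ (p.toAdd.2) = 1 := hp
  have hb : p.toAdd.2 = 0 := by
    have h1 := congrArg SemidirectProduct.rightHom hp'
    rw [map_mul, map_zpow, map_zpow, map_one] at h1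
    have hr : SemidirectProduct.rightHom z = Multiplicative.ofAdd (n : ℤ) := rfl
    rw [SemidirectProduct.rightHom_inl, one_zpow, one_mul, hr] at h1
    rw [← ofAdd_zsmul, smul_eq_mul] at h1
    have h2 : p.toAdd.2 * (n : ℤ) = 0 := congrArg Multiplicative.toAdd h1
    rcases mul_eq_zero.mp h2 with h | h
    · exact h
    · exact absurd h (by exact_mod_cast hn.ne')
  rw [hb, zpow_zero, mul_one, ← map_zpow] at hp'
  have hxa : x ^ p.toAdd.1 = 1 := by
    have : Function.Injective ι := SemidirectProduct.inl_injective
    exact this (by simpa using hp')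
  have ha : p.toAdd.1 = 0 := by
    by_contra h
    exact htf x hx (isOfFinOrder_iff_zpow_eq_one.mpr ⟨p.toAdd.1, h, hxa⟩)
  have : p.toAdd = (0, 0) := Prod.ext ha hb
  calc p = Multiplicative.ofAdd p.toAdd := rfl
    _ = 1 := by rw [this]; rfl
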